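/- For all natural numbers k and l there exists an injective continuous group homomorphism from the topological group (Fin k → Circle) × (Fin l → ℝ) into the real symplectic group Sp(2(k+l),ℝ) whose image is a closed subset of Sp(2(k+l),ℝ). -/

import Mathlib

open Matrix

namespace SpEmbedAux

variable {k l : ℕ}

/-- diagonal of the top-left (and bottom-right) block. -/
noncomputable def aF (x : (Fin k → Circle) × (Fin l → ℝ)) : Fin (k + l) → ℝ :=
  Fin.addCases (fun i => (x.1 i : ℂ).re) (fun _ => 1)

/-- diagonal of the top-right block. -/
noncomputable def bF (x : (Fin k → Circle) × (Fin l → ℝ)) : Fin (k + l) → ℝ :=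
  Fin.addCases (fun i => (x.1 i : ℂ).im) (fun j => x.2 j)

/-- diagonal of the bottom-left block. -/
noncomputable def cF (x : (Fin k → Circle) × (Fin l → ℝ)) : Fin (k + l) → ℝ :=
  Fin.addCases (fun i => -(x.1 i : ℂ).im) (fun _ => 0)

noncomputable def F (x : (Fin k → Circle) × (Fin l → ℝ)) :
    Matrix (Fin (k + l) ⊕ Fin (k + l)) (Fin (k + l) ⊕ Fin (k + l)) ℝ :=
  fromBlocks (diagonal (aF x)) (diagonal (bF x)) (diagonal (cF x)) (diagonal (aF x))

lemma key (x : (Fin k → Circle) × (Fin l → ℝ)) (p : Fin (k + l)) :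
    aF x p * aF x p - cF x p * bF x p = 1 := by
  induction p using Fin.addCases with
  | left i =>
    simp [aF, bF, cF]
    have := Complex.normSq_apply (x.1 i : ℂ)
    rw [Circle.normSq_coe] at this
    linarith
  | right j => simp [aF, bF, cF]

lemma F_mem (x : (Fin k → Circle) × (Fin l → ℝ)) :
    F x ∈ Matrix.symplecticGroup (Fin (k + l)) ℝ := by
  show F x * Matrix.J _ _ * (F x)ᵀ = Matrix.J _ _
  rw [Matrix.J, F, fromBlocks_transpose, fromBlocks_multiply, fromBlocks_multiply]
  simp only [diagonal_transpose, Matrix.mul_zero, Matrix.mul_one, Matrix.mul_neg,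
    Matrix.zero_mul, Matrix.one_mul, zero_add, add_zero, diagonal_mul_diagonal,
    Matrix.neg_mul, diagonal_neg]
  ext (p | p) (q | q) <;>
    simp only [fromBlocks_apply₁₁, fromBlocks_apply₁₂, fromBlocks_apply₂₁, fromBlocks_apply₂₂,
      Matrix.add_apply, Matrix.neg_apply, diagonal_apply, Matrix.one_apply, Matrix.zero_apply,
      Matrix.of_apply] <;>
    split_ifs with h <;> simp_all <;> nlinarith [key x p, key x q]

lemma aF_mul (a b : (Fin k → Circle) × (Fin l → ℝ)) (p : Fin (k + l)) :
    aF (a.1 * b.1, a.2 + b.2) p = aF a p * aF b p + bF a p * cF b p := by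
  induction p using Fin.addCases with
  | left i => simp [aF, bF, cF, Complex.mul_re]; all_goals ring
  | right j => simp [aF, bF, cF]

lemma aF_mul' (a b : (Fin k → Circle) × (Fin l → ℝ)) (p : Fin (k + l)) :
    aF (a.1 * b.1, a.2 + b.2) p = cF a p * bF b p + aF a p * aF b p := by
  induction p using Fin.addCases with
  | left i => simp [aF, bF, cF, Complex.mul_re]; all_goals ring
  | right j => simp [aF, bF, cF]

lemma bF_mul (a b : (Fin k → Circle) × (Fin l → ℝ)) (p : Fin (k + l)) :
    bF (a.1 * b.1, a.2 + b.2) p = aF a p * bF b p + bF a p * aF b p := by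
  induction p using Fin.addCases with
  | left i => simp [aF, bF, cF, Complex.mul_im]; all_goals ring
  | right j => simp [aF, bF, cF, add_comm]

lemma cF_mul (a b : (Fin k → Circle) × (Fin l → ℝ)) (p : Fin (k + l)) :
    cF (a.1 * b.1, a.2 + b.2) p = cF a p * aF b p + aF a p * cF b p := by
  induction p using Fin.addCases with
  | left i => simp [aF, bF, cF, Complex.mul_im]; all_goals ring
  | right j => simp [aF, bF, cF]

lemma F_mul (a b : (Fin k → Circle) × (Fin l → ℝ)) :
    F (a.1 * b.1, a.2 + b.2) = F a * F b := by
  rw [F, F, F, fromBlocks_multiply]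
  simp only [diagonal_mul_diagonal, diagonal_add]
  rw [Matrix.fromBlocks_inj]
  refine ⟨?_, ?_, ?_, ?_⟩
  · exact congrArg _ (funext (aF_mul a b))
  · exact congrArg _ (funext (bF_mul a b))
  · exact congrArg _ (funext (cF_mul a b))
  · exact congrArg _ (funext (aF_mul' a b))

lemma F_inj : Function.Injective (F : (Fin k → Circle) × (Fin l → ℝ) → _) := by
  intro x y h
  have ha : ∀ p, aF x p = aF y p := fun p => by
    have := congrFun (congrFun h (Sum.inl p)) (Sum.inl p)
    simpa [F, fromBlocks_apply₁₁, diagonal_apply_eq] using this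
  have hb : ∀ p, bF x p = bF y p := fun p => by
    have := congrFun (congrFun h (Sum.inl p)) (Sum.inr p)
    simpa [F, fromBlocks_apply₁₂, diagonal_apply_eq] using this
  ext i
  · have h1 := ha (Fin.castAdd l i)
    have h2 := hb (Fin.castAdd l i)
    simp only [aF, bF, Fin.addCases_left] at h1 h2
    exact Complex.ext h1 h2
  · have h2 := hb (Fin.natAdd k i)
    simpa only [bF, Fin.addCases_right] using h2

lemma cont_coord (i : Fin k) :
    Continuous fun x : (Fin k → Circle) × (Fin l → ℝ) => ((x.1 i : ℂ)) :=
  continuous_subtype_val.comp ((continuous_apply i).comp continuous_fst)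

lemma cont_aF (p : Fin (k + l)) :
    Continuous fun x : (Fin k → Circle) × (Fin l → ℝ) => aF x p := by
  induction p using Fin.addCases with
  | left i =>
    simpa [aF, Fin.addCases_left, Function.comp_def] using Complex.continuous_re.comp (cont_coord i)
  | right j => simpa [aF, Fin.addCases_right] using continuous_const (y := (1:ℝ))

lemma cont_bF (p : Fin (k + l)) :
    Continuous fun x : (Fin k → Circle) × (Fin l → ℝ) => bF x p := by
  induction p using Fin.addCases with
  | left i =>
    simpa [bF, Fin.addCases_left, Function.comp_def] using Complex.continuous_im.comp (cont_coord i)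
  | right j =>
    simpa [bF, Fin.addCases_right, Function.comp_def] using (continuous_apply j).comp
      (continuous_snd : Continuous fun x : (Fin k → Circle) × (Fin l → ℝ) => x.2)

lemma cont_cF (p : Fin (k + l)) :
    Continuous fun x : (Fin k → Circle) × (Fin l → ℝ) => cF x p := by
  induction p using Fin.addCases with
  | left i =>
    simp only [cF, Fin.addCases_left]; exact (Complex.continuous_im.comp (cont_coord i)).neg
  | right j => simpa [cF, Fin.addCases_right] using continuous_const (y := (0:ℝ))

lemma cont_diag {X : Type*} [TopologicalSpace X] {n : ℕ} {g : X → Fin n → ℝ}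
    (h : ∀ p, Continuous fun x => g x p) (p q : Fin n) :
    Continuous fun x => diagonal (g x) p q := by
  rcases eq_or_ne p q with rfl | hpq
  · simpa [diagonal_apply_eq] using h p
  · simp only [diagonal_apply_ne _ hpq]; exact continuous_const

lemma cont_F : Continuous (F : (Fin k → Circle) × (Fin l → ℝ) → _) := by
  apply continuous_matrix
  rintro (p | p) (q | q)
  · exact cont_diag cont_aF p q
  · exact cont_diag cont_bF p q
  · exact cont_diag cont_cF p q
  · exact cont_diag cont_aF p q

/-- entry maps on matrices are continuous -/
lemma cont_entry {n : Type*} (i j : n) :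
    Continuous fun M : Matrix n n ℝ => M i j :=
  (continuous_apply j).comp (continuous_apply i)

open Sum in
/-- The closed set of matrices cutting out the range of `F`. -/
def SSet (k l : ℕ) : Set (Matrix (Fin (k+l) ⊕ Fin (k+l)) (Fin (k+l) ⊕ Fin (k+l)) ℝ) :=
  {M | (∀ p q : Fin (k+l), p ≠ q → (M (inl p) (inl q) = 0 ∧ M (inl p) (inr q) = 0 ∧
        M (inr p) (inl q) = 0 ∧ M (inr p) (inr q) = 0)) ∧
   (∀ p, M (inr p) (inr p) = M (inl p) (inl p)) ∧
   (∀ i : Fin k, M (inl (Fin.castAdd l i)) (inl (Fin.castAdd l i)) ^ 2 +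
        M (inl (Fin.castAdd l i)) (inr (Fin.castAdd l i)) ^ 2 = 1 ∧
      M (inr (Fin.castAdd l i)) (inl (Fin.castAdd l i)) =
        - M (inl (Fin.castAdd l i)) (inr (Fin.castAdd l i))) ∧
   (∀ j : Fin l, M (inl (Fin.natAdd k j)) (inl (Fin.natAdd k j)) = 1 ∧
      M (inr (Fin.natAdd k j)) (inl (Fin.natAdd k j)) = 0)}

lemma isClosed_SSet : IsClosed (SSet k l) := by
  have h1 : ∀ (i j : Fin (k+l) ⊕ Fin (k+l)) (c : ℝ),
      IsClosed {M : Matrix (Fin (k+l) ⊕ Fin (k+l)) (Fin (k+l) ⊕ Fin (k+l)) ℝ | M i j = c} :=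
    fun i j c => isClosed_eq (cont_entry i j) continuous_const
  unfold SSet
  simp only [Set.setOf_and, Set.setOf_forall]
  refine ((isClosed_iInter fun p => isClosed_iInter fun q => ?_)).inter
    ((isClosed_iInter fun p => isClosed_eq (cont_entry _ _) (cont_entry _ _)).inter
      ((isClosed_iInter fun i => IsClosed.inter
          (isClosed_eq (((cont_entry _ _).pow 2).add ((cont_entry _ _).pow 2)) continuous_const)
          (isClosed_eq (cont_entry _ _) (cont_entry _ _).neg)).inter
        (isClosed_iInter fun j => IsClosed.inter (h1 _ _ 1) (h1 _ _ 0))))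
  exact isClosed_iInter fun hpq =>
    (h1 _ _ 0).inter ((h1 _ _ 0).inter ((h1 _ _ 0).inter (h1 _ _ 0)))

lemma F_mem_SSet (x : (Fin k → Circle) × (Fin l → ℝ)) : F x ∈ SSet k l := by
  refine ⟨fun p q h => ⟨by simp [F, diagonal_apply_ne _ h], by simp [F, diagonal_apply_ne _ h],
      by simp [F, diagonal_apply_ne _ h], by simp [F, diagonal_apply_ne _ h]⟩,
    fun p => by simp [F], fun i => ⟨?_, ?_⟩, fun j => ⟨?_, ?_⟩⟩
  · simp only [F, fromBlocks_apply₁₁, fromBlocks_apply₁₂, diagonal_apply_eq, aF, bF,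
      Fin.addCases_left]
    have h := Complex.normSq_apply (x.1 i : ℂ)
    rw [Circle.normSq_coe] at h
    nlinarith [h]
  · simp [F, bF, cF]
  · simp [F, aF]
  · simp [F, cF]

lemma SSet_sub_range {M : Matrix (Fin (k+l) ⊕ Fin (k+l)) (Fin (k+l) ⊕ Fin (k+l)) ℝ}
    (hM : M ∈ SSet k l) : ∃ x : (Fin k → Circle) × (Fin l → ℝ), F x = M := by
  obtain ⟨h1, h2, h3, h4⟩ := hM
  refine ⟨(fun i => ⟨⟨M (Sum.inl (Fin.castAdd l i)) (Sum.inl (Fin.castAdd l i)),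
      M (Sum.inl (Fin.castAdd l i)) (Sum.inr (Fin.castAdd l i))⟩, ?_⟩,
    fun j => M (Sum.inl (Fin.natAdd k j)) (Sum.inr (Fin.natAdd k j))), ?_⟩
  · have h := (h3 i).1
    simp only [Submonoid.unitSphere, Submonoid.mem_mk, Subsemigroup.mem_mk,
      mem_sphere_zero_iff_norm]
    show ‖_‖ = 1
    rw [Complex.norm_def, Complex.normSq_mk, show
      M (Sum.inl (Fin.castAdd l i)) (Sum.inl (Fin.castAdd l i)) *
        M (Sum.inl (Fin.castAdd l i)) (Sum.inl (Fin.castAdd l i)) +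
      M (Sum.inl (Fin.castAdd l i)) (Sum.inr (Fin.castAdd l i)) *
        M (Sum.inl (Fin.castAdd l i)) (Sum.inr (Fin.castAdd l i)) = 1 by nlinarith [h],
      Real.sqrt_one]
  · ext (p | p) (q | q) <;>
      simp only [F, fromBlocks_apply₁₁, fromBlocks_apply₁₂, fromBlocks_apply₂₁,
        fromBlocks_apply₂₂] <;>
      rcases eq_or_ne p q with rfl | hpq
    · rw [diagonal_apply_eq]
      induction p using Fin.addCases with
      | left i => simp [aF]
      | right j => simp [aF, (h4 j).1]
    · rw [diagonal_apply_ne _ hpq]; exact ((h1 p q hpq).1).symm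
    · rw [diagonal_apply_eq]
      induction p using Fin.addCases with
      | left i => simp [bF]
      | right j => simp [bF]
    · rw [diagonal_apply_ne _ hpq]; exact ((h1 p q hpq).2.1).symm
    · rw [diagonal_apply_eq]
      induction p using Fin.addCases with
      | left i => simp [cF, (h3 i).2]
      | right j => simp [cF, (h4 j).2]
    · rw [diagonal_apply_ne _ hpq]; exact ((h1 p q hpq).2.2.1).symm
    · rw [diagonal_apply_eq]
      rw [h2 p]
      induction p using Fin.addCases with
      | left i => simp [aF]
      | right j => simp [aF, (h4 j).1]
    · rw [diagonal_apply_ne _ hpq]; exact ((h1 p q hpq).2.2.2).symm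

end SpEmbedAux

open SpEmbedAux in
/-- For all `k l : ℕ` there exists an injective continuous group homomorphism from the
topological group `(Fin k → Circle) × (Fin l → ℝ)` into the real symplectic group
`Sp(2(k+l),ℝ)` whose image is a closed subset of `Sp(2(k+l),ℝ)`.  (The group structure on the
source is multiplicative in the first factor and additive in the second.) -/
theorem torus_times_vector_embeds_in_symplecticGroup (k l : ℕ) :
    ∃ f : (Fin k → Circle) × (Fin l → ℝ) → Matrix.symplecticGroup (Fin (k + l)) ℝ,
      (∀ a b : (Fin k → Circle) × (Fin l → ℝ),
        f (a.1 * b.1, a.2 + b.2) = f a * f b) ∧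
      Function.Injective f ∧ Continuous f ∧ IsClosed (Set.range f) := by
  refine ⟨fun x => ⟨F x, F_mem x⟩, fun a b => Subtype.ext (F_mul a b),
    fun a b h => F_inj (congrArg Subtype.val h), cont_F.subtype_mk _, ?_⟩
  have hr : Set.range (fun x : (Fin k → Circle) × (Fin l → ℝ) =>
      (⟨F x, F_mem x⟩ : Matrix.symplecticGroup (Fin (k + l)) ℝ)) =
      Subtype.val ⁻¹' SSet k l := by
    ext M
    constructor
    · rintro ⟨x, rfl⟩
      exact F_mem_SSet x
    · intro h
      obtain ⟨x, hx⟩ := SSet_sub_range h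
      exact ⟨x, Subtype.ext hx⟩
  rw [hr]
  exact (isClosed_SSet).preimage continuous_subtype_val
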